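/- Let $U \in \mathbb{R}^{d_1 \times k}$, let $z_2 \in \mathbb{R}^k$ with $z_2 \neq 0$ and $\tilde z_2 = z_2/\|z_2\|_2$, and let $x_1 \in \mathbb{R}^{d_1}$ with $z_1 := U^T x_1 \neq 0$ and $\tilde z_1 := z_1/\|z_1\|_2$. If the normalized latent representations satisfy $\tilde z_1^T \tilde z_2 = 1$, then the gradient of the common-structure score $f(x) = \big(\tfrac{(U^T x)^T \tilde z_2}{\|U^T x\|_2}\big)\cdot\big((U^T x)^T z_2\big)$ at $x_1$ is a positive scalar multiple of the linear projection direction: $\nabla f(x_1) = \frac{\|z_2\|_2}{\|z_1\|_2}\, U U^T x_1$; in particular $\nabla f(x_1)$ is proportional to $U U^T x_1$. -/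

import Mathlib

open scoped RealInnerProductSpace

/-- Interpret a plain vector as an element of Euclidean space (with the ℓ² norm). -/
def toE {k : ℕ} (v : Fin k → ℝ) : EuclideanSpace ℝ (Fin k) := WithLp.toLp 2 v

set_option maxHeartbeats 1000000

/-- Boundary case 2: if the normalized latent representations are perfectly correlated, the
gradient of the common-structure score is a positive multiple of the projection `U Uᵀ x₁`. -/
theorem common_score_gradient_proj {d1 k : ℕ}
    (U : Matrix (Fin d1) (Fin k) ℝ)
    (z2 : EuclideanSpace ℝ (Fin k)) (hz2 : z2 ≠ 0)
    (tz2 : EuclideanSpace ℝ (Fin k)) (htz2 : tz2 = ‖z2‖⁻¹ • z2)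
    (x1 : EuclideanSpace ℝ (Fin d1))
    (z1 : EuclideanSpace ℝ (Fin k)) (hz1def : z1 = toE (U.transpose.mulVec x1))
    (hz1 : z1 ≠ 0)
    (tz1 : EuclideanSpace ℝ (Fin k)) (htz1 : tz1 = ‖z1‖⁻¹ • z1)
    (f : EuclideanSpace ℝ (Fin d1) → ℝ)
    (hf : ∀ x : EuclideanSpace ℝ (Fin d1),
      f x = (⟪toE (U.transpose.mulVec x), tz2⟫ / ‖toE (U.transpose.mulVec x)‖) *
        ⟪toE (U.transpose.mulVec x), z2⟫)
    (hcorr : ⟪tz1, tz2⟫ = 1) :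
    HasGradientAt f
      ((‖z2‖ / ‖z1‖) • toE (U.mulVec (U.transpose.mulVec x1))) x1 ∧
    0 < ‖z2‖ / ‖z1‖ := by
  have hn1 : (0:ℝ) < ‖z1‖ := norm_pos_iff.mpr hz1
  have hn2 : (0:ℝ) < ‖z2‖ := norm_pos_iff.mpr hz2
  have hpos : 0 < ‖z2‖ / ‖z1‖ := div_pos hn2 hn1
  refine ⟨?_, hpos⟩
  -- tz1 = tz2 from inner = 1
  have htzeq : tz1 = tz2 := by
    have h1 : ‖tz1‖ = 1 := by
      rw [htz1, norm_smul, norm_inv, norm_norm, inv_mul_cancel₀ hn1.ne']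
    have h2 : ‖tz2‖ = 1 := by
      rw [htz2, norm_smul, norm_inv, norm_norm, inv_mul_cancel₀ hn2.ne']
    exact (inner_eq_one_iff_of_norm_eq_one h1 h2).mp hcorr
  have hz2eq : z2 = (‖z2‖ / ‖z1‖) • z1 := by
    have h := htzeq
    rw [htz1, htz2] at h
    have := congrArg (fun v : EuclideanSpace ℝ (Fin k) => (‖z2‖ : ℝ) • v) h
    simp only [smul_smul, mul_inv_cancel₀ hn2.ne', one_smul] at this
    rw [div_eq_mul_inv]
    exact this.symm
  -- the linear map A
  set A : EuclideanSpace ℝ (Fin d1) →L[ℝ] EuclideanSpace ℝ (Fin k) :=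
    LinearMap.toContinuousLinearMap (Matrix.toEuclideanLin U.transpose) with hA
  have hAx : ∀ x, A x = toE (U.transpose.mulVec x) := fun x => rfl
  have hAx1 : A x1 = z1 := by rw [hAx, hz1def]
  -- rewrite f
  have hsqrt : ∀ v : EuclideanSpace ℝ (Fin k), Real.sqrt ⟪v, v⟫ = ‖v‖ := fun v => by
    rw [real_inner_self_eq_norm_mul_norm, Real.sqrt_mul_self (norm_nonneg v)]
  have hfeq : f = fun x => (‖z2‖⁻¹ * (⟪A x, z2⟫ * ⟪A x, z2⟫)) * (Real.sqrt ⟪A x, A x⟫)⁻¹ := by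
    funext x
    rw [hf x, htz2, hsqrt, ← hAx]
    rw [real_inner_smul_right]
    ring
  -- derivative pieces
  have hg : HasFDerivAt (fun x => (⟪A x, z2⟫ : ℝ)) ((innerSL ℝ z2).comp A) x1 := by
    have hfun : (fun x => (⟪A x, z2⟫ : ℝ)) = fun x => ((innerSL ℝ z2).comp A) x := by
      funext x
      simp only [ContinuousLinearMap.comp_apply, innerSL_apply_apply]
      exact real_inner_comm _ _
    rw [hfun]
    exact ((innerSL ℝ z2).comp A).hasFDerivAt
  have hq : HasFDerivAt (fun x => (⟪A x, A x⟫ : ℝ))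
      ((fderivInnerCLM ℝ (A x1, A x1)).comp (A.prod A)) x1 :=
    A.hasFDerivAt.inner ℝ A.hasFDerivAt
  have hq1 : (⟪A x1, A x1⟫ : ℝ) = ‖z1‖ * ‖z1‖ := by
    rw [hAx1, real_inner_self_eq_norm_mul_norm]
  have hq1ne : (⟪A x1, A x1⟫ : ℝ) ≠ 0 := by rw [hq1]; positivity
  have hs := (Real.hasDerivAt_sqrt hq1ne).comp_hasFDerivAt x1 hq
  have hsne : Real.sqrt ⟪A x1, A x1⟫ ≠ 0 := by
    rw [hsqrt, hAx1]; exact hn1.ne'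
  have hinv := (hasDerivAt_inv hsne).comp_hasFDerivAt x1 hs
  have hnum := (hg.mul hg).const_mul (‖z2‖⁻¹)
  have hF := hnum.mul hinv
  rw [hasGradientAt_iff_hasFDerivAt, hfeq]
  convert hF using 1
  case e'_9 => rfl
  case e'_11 => rfl
  -- identify the derivative maps
  apply ContinuousLinearMap.ext
  intro v
  have hadj : (⟪toE (U.mulVec (U.transpose.mulVec x1)), v⟫ : ℝ) = ⟪z1, A v⟫ := by
    rw [hAx, hz1def]
    simp only [toE, PiLp.inner_apply, RCLike.inner_apply, conj_trivial, Matrix.mulVec,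
      dotProduct, Matrix.transpose_apply, Finset.sum_mul, Finset.mul_sum]
    rw [Finset.sum_comm]
    apply Finset.sum_congr rfl; intro i _
    rw [Finset.sum_comm]
    apply Finset.sum_congr rfl; intro j _
    apply Finset.sum_congr rfl; intro l _
    ring
  have hz1z2 : (⟪z1, z2⟫ : ℝ) = ‖z1‖ * ‖z2‖ := by
    have h : (⟪z1, z2⟫ : ℝ) = (‖z2‖ / ‖z1‖) * ⟪z1, z1⟫ := by
      conv_lhs => rw [hz2eq]
      rw [real_inner_smul_right]
    rw [h, real_inner_self_eq_norm_mul_norm]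
    field_simp
  have hz2Av : (⟪z2, A v⟫ : ℝ) = (‖z2‖ / ‖z1‖) * ⟪z1, A v⟫ := by
    conv_lhs => rw [hz2eq]
    rw [real_inner_smul_left]
  simp only [InnerProductSpace.toDual_apply_apply, ContinuousLinearMap.add_apply,
    ContinuousLinearMap.smul_apply, ContinuousLinearMap.comp_apply,
    ContinuousLinearMap.prod_apply, innerSL_apply_apply, fderivInnerCLM_apply,
    ContinuousLinearMap.coe_smul', Pi.smul_apply, smul_eq_mul]
  rw [real_inner_smul_left, hadj, hz2Av]
  simp only [Function.comp_apply, Pi.mul_apply, hAx1, real_inner_self_eq_norm_mul_norm, hz1z2,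
    real_inner_comm z1 (A v), Real.sqrt_mul_self (norm_nonneg z1)]
  set a : ℝ := ⟪z1, A v⟫
  field_simp
  ring
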